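/- arXiv:1810.01195 — 2 statements merged into one kernel-verified Lean document; each statement's English description precedes it below -/
import Mathlib

section
/- A stationary functional AR(1) process X_t = Φ(X_{t-1}) + ε_t, where Φ is a bounded linear operator on H with ‖Φ‖_op < 1 and (ε_t) are i.i.d. mean-zero elements of H with E‖ε_0‖² < ∞, admits the stationary solution X_t = Σ_{j=0}^∞ Φ^j(ε_{t-j}) and is L²-m-approximable. -/
open MeasureTheory ProbabilityTheory Filter
open scoped ENNReal Topology NNReal

section FAR1Aux

variable {Ω H : Type*} [MeasurableSpace Ω]

/-- Pushforward of an independent family along an injective reindexing is the product measure. -/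
theorem far1_aux_map_eq_pi {ι κ : Type*} [MeasurableSpace H] [Fintype κ]
    (μ : Measure Ω) [IsProbabilityMeasure μ] (f : ι → Ω → H) (hf : ∀ i, Measurable (f i))
    (hind : iIndepFun f μ) (σ : κ → ι)
    (hσ : Function.Injective σ) :
    μ.map (fun ω (k : κ) => f (σ k) ω) = Measure.pi (fun k => μ.map (f (σ k))) := by
  classical
  refine (Measure.pi_eq fun A hA => ?_).symm
  rw [Measure.map_apply (measurable_pi_lambda _ fun k => hf (σ k)) (MeasurableSet.univ_pi hA)]
  set B : ι → Set H := Function.extend σ A (fun _ => Set.univ) with hB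
  have hBσ : ∀ k, B (σ k) = A k := fun k => hσ.extend_apply _ _ _
  have h1 : (fun ω (k : κ) => f (σ k) ω) ⁻¹' (Set.univ.pi A)
      = ⋂ i ∈ Finset.univ.image σ, f i ⁻¹' B i := by
    ext ω
    simp only [Set.mem_preimage, Set.mem_univ_pi, Set.mem_iInter₂, Finset.mem_image,
      Finset.mem_univ, true_and]
    constructor
    · rintro h i ⟨k, rfl⟩
      rw [hBσ]; exact h k
    · intro h k
      have := h (σ k) ⟨k, rfl⟩
      rwa [hBσ] at this
  have hBmeas : ∀ i ∈ Finset.univ.image σ, MeasurableSet (B i) := by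
    intro i hi
    obtain ⟨k, -, rfl⟩ := Finset.mem_image.mp hi
    rw [hBσ]; exact hA k
  rw [h1, hind.measure_inter_preimage_eq_mul _ hBmeas,
    Finset.prod_image (fun k _ k' _ h => hσ h)]
  exact Finset.prod_congr rfl fun k _ => by
    rw [hBσ, Measure.map_apply (hf (σ k)) (hA k)]

/-- A series of measurable functions with summable `L¹`-bounds has a.e. finite sum of norms. -/
theorem far1_aux_ae_tsum_lt_top [NormedAddCommGroup H] [MeasurableSpace H]
    [OpensMeasurableSpace H]
    (μ : Measure Ω) (g : ℕ → Ω → H) (hg : ∀ j, Measurable (g j)) (c : ℕ → ℝ≥0∞)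
    (hc : (∑' j, c j) ≠ ⊤) (hb : ∀ j, (∫⁻ ω, ‖g j ω‖₊ ∂μ) ≤ c j) :
    ∀ᵐ ω ∂μ, (∑' j, (‖g j ω‖₊ : ℝ≥0∞)) < ⊤ := by
  have hm : ∀ j, AEMeasurable (fun ω => (‖g j ω‖₊ : ℝ≥0∞)) μ :=
    fun j => ((hg j).nnnorm.coe_nnreal_ennreal).aemeasurable
  have A : (∫⁻ ω, ∑' j, (‖g j ω‖₊ : ℝ≥0∞) ∂μ) ≠ ⊤ := by
    rw [lintegral_tsum hm]
    exact ne_top_of_le_ne_top hc (ENNReal.tsum_le_tsum hb)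
  exact ae_lt_top' (AEMeasurable.ennreal_tsum hm) A

theorem far1_aux_summable {H : Type*} [NormedAddCommGroup H] [CompleteSpace H] {g : ℕ → H}
    (h : (∑' j, (‖g j‖₊ : ℝ≥0∞)) < ⊤) : Summable g :=
  Summable.of_nnnorm (ENNReal.tsum_coe_ne_top_iff_summable.mp h.ne)

end FAR1Aux


/-- A stationary functional AR(1) process `X_t = Φ(X_{t-1}) + ε_t`, with
`‖Φ‖_op < 1` and i.i.d. mean-zero innovations `ε_t ∈ H` with `E‖ε_0‖² < ∞`, admits the
stationary solution `X_t = Σ_{j≥0} Φ^j(ε_{t-j})` and is `L²`-m-approximable: with the coupled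
versions `X_t^{(m)} = Σ_{j<m} Φ^j(ε_{t-j}) + Σ_{j≥m} Φ^j(ε'_{t-j})` built from independent
copies `ε'`, one has `Σ_{m≥1} (E‖X_0 − X_0^{(m)}‖²)^{1/2} < ∞`. -/
theorem far1_stationary_solution_L2_m_approximable
    {H : Type*} [NormedAddCommGroup H] [InnerProductSpace ℝ H] [CompleteSpace H]
    [MeasurableSpace H] [BorelSpace H] [SecondCountableTopology H]
    {Ω : Type*} [MeasurableSpace Ω] (μ : Measure Ω) [IsProbabilityMeasure μ]
    (Φ : H →L[ℝ] H) (hΦ : ‖Φ‖ < 1)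
    (ε ε' : ℤ → Ω → H)
    (hmeas : ∀ k, Measurable (ε k)) (hmeas' : ∀ k, Measurable (ε' k))
    -- the innovations and their copies are jointly independent and identically distributed
    (hindep : iIndepFun (Sum.elim ε ε') μ)
    (hident : ∀ k : ℤ ⊕ ℤ, IdentDistrib (Sum.elim ε ε' k) (ε 0) μ μ)
    -- mean zero and finite second moment
    (hmean : ∫ ω, ε 0 ω ∂μ = 0) (hL2 : MemLp (ε 0) 2 μ)
    -- the candidate solution and its coupled m-dependent approximations
    (X : ℤ → Ω → H) (hX : ∀ t ω, X t ω = ∑' j : ℕ, (Φ ^ j) (ε (t - j) ω))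
    (Xm : ℕ → ℤ → Ω → H)
    (hXm : ∀ m t ω, Xm m t ω =
      (∑ j ∈ Finset.range m, (Φ ^ j) (ε (t - j) ω)) + ∑' j : ℕ, (Φ ^ (m + j)) (ε' (t - m - j) ω)) :
    -- (1) X solves the AR(1) equation,
    (∀ t : ℤ, ∀ᵐ ω ∂μ, X t ω = Φ (X (t - 1) ω) + ε t ω) ∧
    -- (2) X is stationary,
    (∀ t : ℤ, IdentDistrib (X t) (X 0) μ μ) ∧
    -- (3) X is L²-m-approximable.
    (Summable fun m : ℕ => Real.sqrt (∫ ω, ‖X 0 ω - Xm (m + 1) 0 ω‖ ^ 2 ∂μ)) := by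
  classical
  set r : ℝ := ‖Φ‖ with hr
  have r0 : 0 ≤ r := norm_nonneg _
  have hgeom : Summable fun j : ℕ => r ^ j := summable_geometric_of_lt_one r0 hΦ
  have hpow : ∀ (j : ℕ) (x : H), ‖(Φ ^ j) x‖ ≤ r ^ j * ‖x‖ := by
    intro j
    induction j with
    | zero => intro x; simp
    | succ n ih =>
      intro x
      have h1 : (Φ ^ (n + 1)) x = (Φ ^ n) (Φ x) := by
        rw [pow_succ]; rfl
      rw [h1]
      calc ‖(Φ ^ n) (Φ x)‖ ≤ r ^ n * ‖Φ x‖ := ih (Φ x)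
        _ ≤ r ^ n * (r * ‖x‖) :=
          mul_le_mul_of_nonneg_left (Φ.le_opNorm x) (by positivity)
        _ = r ^ (n + 1) * ‖x‖ := by ring
  -- measurability of the joint family
  have hmeasE : ∀ i : ℤ ⊕ ℤ, Measurable (Sum.elim ε ε' i) := by
    rintro (k | k)
    · exact hmeas k
    · exact hmeas' k
  -- second moments
  set K : ℝ≥0∞ := eLpNorm (ε 0) 2 μ with hKdef
  have hKne : K ≠ ⊤ := hL2.2.ne
  have hKk : ∀ k : ℤ, eLpNorm (ε k) 2 μ = K := fun k => (hident (Sum.inl k)).eLpNorm_eq 2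
  have hK'k : ∀ k : ℤ, eLpNorm (ε' k) 2 μ = K := fun k => (hident (Sum.inr k)).eLpNorm_eq 2
  -- first moments
  set L : ℝ≥0∞ := ∫⁻ ω, ‖ε 0 ω‖₊ ∂μ with hLdef
  have hLne : L ≠ ⊤ := by
    have h1 : MemLp (ε 0) 1 μ := hL2.mono_exponent (by norm_num)
    rw [hLdef]
    have h2 := h1.2.ne
    rw [eLpNorm_one_eq_lintegral_enorm] at h2
    exact h2
  have hnnmeas : Measurable fun x : H => (‖x‖₊ : ℝ≥0∞) := measurable_nnnorm.coe_nnreal_ennreal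
  have hLk : ∀ k : ℤ, (∫⁻ ω, ‖ε k ω‖₊ ∂μ) = L :=
    fun k => ((hident (Sum.inl k)).comp hnnmeas).lintegral_eq
  have hL'k : ∀ k : ℤ, (∫⁻ ω, ‖ε' k ω‖₊ ∂μ) = L :=
    fun k => ((hident (Sum.inr k)).comp hnnmeas).lintegral_eq
  -- term bounds
  have hterm_lint : ∀ (k : ℕ) (η : Ω → H),
      (∫⁻ ω, ‖(Φ ^ k) (η ω)‖₊ ∂μ) ≤ ENNReal.ofReal (r ^ k) * ∫⁻ ω, ‖η ω‖₊ ∂μ := by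
    intro k η
    calc (∫⁻ ω, (‖(Φ ^ k) (η ω)‖₊ : ℝ≥0∞) ∂μ)
        ≤ ∫⁻ ω, ENNReal.ofReal (r ^ k) * ‖η ω‖₊ ∂μ := by
          refine lintegral_mono fun ω => ?_
          rw [← enorm_eq_nnnorm, ← enorm_eq_nnnorm, ← ofReal_norm, ← ofReal_norm,
            ← ENNReal.ofReal_mul (by positivity)]
          exact ENNReal.ofReal_le_ofReal (hpow k _)
      _ = ENNReal.ofReal (r ^ k) * ∫⁻ ω, ‖η ω‖₊ ∂μ :=
          lintegral_const_mul' _ _ ENNReal.ofReal_ne_top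
  have hterm_eLp : ∀ (k : ℕ) (η : Ω → H),
      eLpNorm (fun ω => (Φ ^ k) (η ω)) 2 μ ≤ ENNReal.ofReal (r ^ k) * eLpNorm η 2 μ := by
    intro k η
    have h1 : eLpNorm (fun ω => (Φ ^ k) (η ω)) 2 μ ≤ eLpNorm ((r ^ k : ℝ) • η) 2 μ := by
      refine eLpNorm_mono fun ω => ?_
      simp only [Pi.smul_apply, norm_smul, Real.norm_eq_abs, abs_of_nonneg (by positivity : (0:ℝ) ≤ r ^ k)]
      exact hpow k _
    refine h1.trans_eq ?_
    rw [eLpNorm_const_smul]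
    congr 1
    rw [← ofReal_norm, Real.norm_eq_abs, abs_of_nonneg (by positivity)]
  -- summable geometric weights in ℝ≥0∞
  have hcsum : ∀ n : ℕ, (∑' j : ℕ, ENNReal.ofReal (r ^ (n + j)) * L) ≠ ⊤ := by
    intro n
    rw [ENNReal.tsum_mul_right, ← ENNReal.ofReal_tsum_of_nonneg (fun j => by positivity)
      (by simpa [pow_add] using hgeom.mul_left (r ^ n))]
    exact ENNReal.mul_ne_top ENNReal.ofReal_ne_top hLne
  -- a.e. absolute convergence of shifted series
  have haegen : ∀ (n : ℕ) (η : ℕ → Ω → H), (∀ j, Measurable (η j)) →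
      (∀ j, (∫⁻ ω, ‖η j ω‖₊ ∂μ) = L) →
      ∀ᵐ ω ∂μ, (∑' j : ℕ, (‖(Φ ^ (n + j)) (η j ω)‖₊ : ℝ≥0∞)) < ⊤ := by
    intro n η hη hηL
    refine far1_aux_ae_tsum_lt_top μ _
      (fun j => ((Φ ^ (n + j)).continuous.measurable).comp (hη j))
      (fun j => ENNReal.ofReal (r ^ (n + j)) * L) (hcsum n) (fun j => ?_)
    calc (∫⁻ ω, ‖(Φ ^ (n + j)) (η j ω)‖₊ ∂μ)
        ≤ ENNReal.ofReal (r ^ (n + j)) * ∫⁻ ω, ‖η j ω‖₊ ∂μ := hterm_lint _ _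
      _ = ENNReal.ofReal (r ^ (n + j)) * L := by rw [hηL j]
  have haeε : ∀ t : ℤ, ∀ᵐ ω ∂μ, (∑' j : ℕ, (‖(Φ ^ j) (ε (t - j) ω)‖₊ : ℝ≥0∞)) < ⊤ := by
    intro t
    have := haegen 0 (fun j => ε (t - j)) (fun j => hmeas _) (fun j => hLk _)
    simpa using this
  refine ⟨?_, ?_, ?_⟩
  -- (1) AR(1) equation
  · intro t
    filter_upwards [haeε t, haeε (t - 1)] with ω h1 h2
    have hs1 : Summable fun j : ℕ => (Φ ^ j) (ε (t - j) ω) := far1_aux_summable h1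
    have hs2 : Summable fun j : ℕ => (Φ ^ j) (ε (t - 1 - j) ω) := far1_aux_summable h2
    rw [hX t ω, hX (t - 1) ω, Summable.tsum_eq_zero_add hs1]
    have e0 : (Φ ^ (0 : ℕ)) (ε (t - ((0 : ℕ) : ℤ)) ω) = ε t ω := by simp
    have eterm : ∀ j : ℕ, (Φ ^ (j + 1)) (ε (t - ((j + 1 : ℕ) : ℤ)) ω)
        = Φ ((Φ ^ j) (ε (t - 1 - j) ω)) := by
      intro j
      have hidx : (t - ((j + 1 : ℕ) : ℤ)) = t - 1 - j := by push_cast; ring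
      rw [hidx, pow_succ']
      rfl
    have hmain : (∑' j : ℕ, (Φ ^ (j + 1)) (ε (t - ((j + 1 : ℕ) : ℤ)) ω))
        = Φ (∑' j : ℕ, (Φ ^ j) (ε (t - 1 - j) ω)) := by
      rw [Φ.map_tsum hs2]
      exact tsum_congr eterm
    rw [hmain, e0]
    exact add_comm _ _
  -- (2) stationarity
  · set V : ℤ → Ω → ℕ → H := fun t ω j => ε (t - j) ω with hVdef
    have hVmeas : ∀ t, Measurable (V t) := fun t => measurable_pi_lambda _ fun j => hmeas _
    have hcyl : ∀ (t : ℤ) (I : Finset ℕ) (S : Set (∀ _ : I, H)), MeasurableSet S →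
        μ.map (V t) (MeasureTheory.cylinder I S) = Measure.pi (fun _ : I => μ.map (ε 0)) S := by
      intro t I S hS
      have hσ : Function.Injective (fun j : I => (Sum.inl (t - ((j : ℕ) : ℤ)) : ℤ ⊕ ℤ)) := by
        intro a b hab
        simp only [Sum.inl.injEq, sub_right_inj, Nat.cast_inj] at hab
        exact Subtype.ext hab
      rw [Measure.map_apply (hVmeas t) hS.cylinder]
      have hpre : V t ⁻¹' cylinder I S
          = (fun ω (k : I) =>
              Sum.elim ε ε' ((fun j : I => (Sum.inl (t - ((j : ℕ) : ℤ)) : ℤ ⊕ ℤ)) k) ω) ⁻¹' S := rfl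
      rw [hpre, ← Measure.map_apply (measurable_pi_lambda _ fun k => hmeasE _) hS,
        far1_aux_map_eq_pi μ (Sum.elim ε ε') hmeasE hindep _ hσ]
      have : (fun k : I => μ.map (Sum.elim ε ε' (Sum.inl (t - ((k : ℕ) : ℤ)))))
          = fun _ : I => μ.map (ε 0) := funext fun k => (hident _).map_eq
      rw [this]
    have hlaweq : ∀ t, μ.map (V t) = μ.map (V 0) := by
      intro t
      haveI h1 : IsProbabilityMeasure (μ.map (V t)) :=
        Measure.isProbabilityMeasure_map (hVmeas t).aemeasurable
      haveI h2 : IsProbabilityMeasure (μ.map (V 0)) :=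
        Measure.isProbabilityMeasure_map (hVmeas 0).aemeasurable
      refine ext_of_generate_finite _ generateFrom_measurableCylinders.symm
        isPiSystem_measurableCylinders (fun s hs => ?_) (by simp)
      obtain ⟨I, S, hS, rfl⟩ := (mem_measurableCylinders s).mp hs
      rw [hcyl t I S hS, hcyl 0 I S hS]
    set G : (ℕ → H) → H := fun y => ∑' j : ℕ, (Φ ^ j) (y j) with hGdef
    have hXG : ∀ t ω, X t ω = G (V t ω) := fun t ω => hX t ω
    have hA'meas : MeasurableSet {y : ℕ → H | (∑' j : ℕ, (‖(Φ ^ j) (y j)‖₊ : ℝ≥0∞)) < ⊤} :=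
      measurableSet_lt (Measurable.ennreal_tsum fun j =>
        ((Φ ^ j).continuous.measurable.comp (measurable_pi_apply j)).nnnorm.coe_nnreal_ennreal)
        measurable_const
    have hA'ae : ∀ᵐ y ∂(μ.map (V 0)), (∑' j : ℕ, (‖(Φ ^ j) (y j)‖₊ : ℝ≥0∞)) < ⊤ := by
      refine (ae_map_iff (hVmeas 0).aemeasurable hA'meas).mpr ?_
      filter_upwards [haeε 0] with ω hω
      exact hω
    have hGaem : AEMeasurable G (μ.map (V 0)) := by
      refine aemeasurable_of_tendsto_metrizable_ae atTop
        (fun n => (Finset.measurable_sum (Finset.range n) fun j _ =>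
          (Φ ^ j).continuous.measurable.comp (measurable_pi_apply j)).aemeasurable) ?_
      filter_upwards [hA'ae] with y hy
      have hs : Summable fun j : ℕ => (Φ ^ j) (y j) := far1_aux_summable hy
      exact hs.hasSum.tendsto_sum_nat
    have hGaem' : ∀ t, AEMeasurable G (μ.map (V t)) := fun t => (hlaweq t) ▸ hGaem
    have hXeq : ∀ t, X t = G ∘ V t := fun t => funext fun ω => hXG t ω
    have hXaem : ∀ t, AEMeasurable (X t) μ := by
      intro t
      rw [hXeq t]
      exact (hGaem' t).comp_measurable (hVmeas t)
    intro t
    refine ⟨hXaem t, hXaem 0, ?_⟩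
    rw [hXeq t, hXeq 0,
      ← AEMeasurable.map_map_of_aemeasurable (hGaem' t) (hVmeas t).aemeasurable,
      ← AEMeasurable.map_map_of_aemeasurable (hGaem' 0) (hVmeas 0).aemeasurable, hlaweq t]
  -- (3) L²-m-approximability
  · have h1r : (0 : ℝ) < 1 - r := sub_pos.mpr hΦ
    have hC0 : 0 ≤ 2 * K.toReal * (1 - r)⁻¹ * r := by positivity
    refine Summable.of_nonneg_of_le (fun m => Real.sqrt_nonneg _) (fun m => ?_)
      (hgeom.mul_left (2 * K.toReal * (1 - r)⁻¹ * r))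
    -- fixed m
    set q : ℕ → Ω → H := fun j ω =>
      (Φ ^ (m + 1 + j)) (ε (0 - ((m + 1 : ℕ) : ℤ) - j) ω)
        - (Φ ^ (m + 1 + j)) (ε' (0 - ((m + 1 : ℕ) : ℤ) - j) ω) with hq
    have hqmeas : ∀ j, Measurable (q j) := fun j =>
      ((Φ ^ (m + 1 + j)).continuous.measurable.comp (hmeas _)).sub
        ((Φ ^ (m + 1 + j)).continuous.measurable.comp (hmeas' _))
    set P : ℕ → Ω → H := fun n ω => ∑ j ∈ Finset.range n, q j ω with hP
    have hPmeas : ∀ n, Measurable (P n) := fun n => Finset.measurable_sum _ fun j _ => hqmeas j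
    set D : Ω → H := fun ω => X 0 ω - Xm (m + 1) 0 ω with hD
    have hEg := haegen (m + 1) (fun j => ε (0 - ((m + 1 : ℕ) : ℤ) - j))
      (fun j => hmeas _) (fun j => hLk _)
    have hEg' := haegen (m + 1) (fun j => ε' (0 - ((m + 1 : ℕ) : ℤ) - j))
      (fun j => hmeas' _) (fun j => hL'k _)
    have htend : ∀ᵐ ω ∂μ, Tendsto (fun n => P n ω) atTop (𝓝 (D ω)) := by
      filter_upwards [haeε 0, hEg, hEg'] with ω h1 h2 h3
      have hf : Summable fun j : ℕ => (Φ ^ j) (ε ((0 : ℤ) - j) ω) := far1_aux_summable h1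
      have hg : Summable fun j : ℕ => (Φ ^ (m + 1 + j)) (ε (0 - ((m + 1 : ℕ) : ℤ) - j) ω) :=
        far1_aux_summable h2
      have hg' : Summable fun j : ℕ => (Φ ^ (m + 1 + j)) (ε' (0 - ((m + 1 : ℕ) : ℤ) - j) ω) :=
        far1_aux_summable h3
      have hsq : Summable fun j => q j ω := hg.sub hg'
      have hDval : D ω = ∑' j : ℕ, q j ω := by
        have hsplit := Summable.sum_add_tsum_nat_add
          (f := fun j : ℕ => (Φ ^ j) (ε ((0 : ℤ) - j) ω)) (m + 1) hf
        have htail : (∑' j : ℕ, (Φ ^ (j + (m + 1))) (ε ((0 : ℤ) - ((j + (m + 1) : ℕ) : ℤ)) ω))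
            = ∑' j : ℕ, (Φ ^ (m + 1 + j)) (ε (0 - ((m + 1 : ℕ) : ℤ) - j) ω) := by
          refine tsum_congr fun j => ?_
          have h2' : ((0 : ℤ) - ((j + (m + 1) : ℕ) : ℤ)) = 0 - ((m + 1 : ℕ) : ℤ) - j := by
            push_cast; ring
          have h1' : j + (m + 1) = m + 1 + j := by ring
          rw [h2', h1']
        show X 0 ω - Xm (m + 1) 0 ω = ∑' j : ℕ, q j ω
        rw [hX 0 ω, hXm (m + 1) 0 ω, ← hsplit, htail, add_sub_add_left_eq_sub]
        exact (Summable.tsum_sub hg hg').symm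
      rw [hDval]
      exact hsq.hasSum.tendsto_sum_nat
    have hDaem : AEMeasurable D μ :=
      aemeasurable_of_tendsto_metrizable_ae atTop (fun n => (hPmeas n).aemeasurable) htend
    set B : ℝ≥0∞ := ENNReal.ofReal (r ^ (m + 1) * (1 - r)⁻¹) * (2 * K) with hB
    have hBne : B ≠ ⊤ :=
      ENNReal.mul_ne_top ENNReal.ofReal_ne_top (ENNReal.mul_ne_top (by simp) hKne)
    have hqeLp : ∀ j, eLpNorm (q j) 2 μ ≤ ENNReal.ofReal (r ^ (m + 1 + j)) * (2 * K) := by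
      intro j
      have h1 := hterm_eLp (m + 1 + j) (ε (0 - ((m + 1 : ℕ) : ℤ) - j))
      have h2 := hterm_eLp (m + 1 + j) (ε' (0 - ((m + 1 : ℕ) : ℤ) - j))
      rw [hKk] at h1
      rw [hK'k] at h2
      calc eLpNorm (q j) 2 μ
          ≤ eLpNorm (fun ω => (Φ ^ (m + 1 + j)) (ε (0 - ((m + 1 : ℕ) : ℤ) - j) ω)) 2 μ
            + eLpNorm (fun ω => (Φ ^ (m + 1 + j)) (ε' (0 - ((m + 1 : ℕ) : ℤ) - j) ω)) 2 μ :=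
            eLpNorm_sub_le
              ((Φ ^ (m + 1 + j)).continuous.measurable.comp (hmeas _)).aestronglyMeasurable
              ((Φ ^ (m + 1 + j)).continuous.measurable.comp (hmeas' _)).aestronglyMeasurable
              one_le_two
        _ ≤ ENNReal.ofReal (r ^ (m + 1 + j)) * K + ENNReal.ofReal (r ^ (m + 1 + j)) * K :=
            add_le_add h1 h2
        _ = ENNReal.ofReal (r ^ (m + 1 + j)) * (2 * K) := by rw [← mul_add, two_mul]
    have hsum_geom : ∀ n : ℕ,
        (∑ j ∈ Finset.range n, r ^ (m + 1 + j)) ≤ r ^ (m + 1) * (1 - r)⁻¹ := by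
      intro n
      have h1 : (∑ j ∈ Finset.range n, r ^ j) ≤ (1 - r)⁻¹ := by
        rw [← tsum_geometric_of_lt_one r0 hΦ]
        exact Summable.sum_le_tsum _ (fun j _ => by positivity) hgeom
      calc (∑ j ∈ Finset.range n, r ^ (m + 1 + j))
          = r ^ (m + 1) * ∑ j ∈ Finset.range n, r ^ j := by
            rw [Finset.mul_sum]
            exact Finset.sum_congr rfl fun j _ => by rw [pow_add]
        _ ≤ r ^ (m + 1) * (1 - r)⁻¹ := mul_le_mul_of_nonneg_left h1 (by positivity)
    have hPle : ∀ n, eLpNorm (P n) 2 μ ≤ B := by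
      intro n
      have heq : P n = ∑ j ∈ Finset.range n, q j := by
        funext ω
        simp [hP, Finset.sum_apply]
      calc eLpNorm (P n) 2 μ = eLpNorm (∑ j ∈ Finset.range n, q j) 2 μ := by rw [heq]
        _ ≤ ∑ j ∈ Finset.range n, eLpNorm (q j) 2 μ :=
            eLpNorm_sum_le (fun j _ => (hqmeas j).aestronglyMeasurable) one_le_two
        _ ≤ ∑ j ∈ Finset.range n, ENNReal.ofReal (r ^ (m + 1 + j)) * (2 * K) :=
            Finset.sum_le_sum fun j _ => hqeLp j
        _ = ENNReal.ofReal (∑ j ∈ Finset.range n, r ^ (m + 1 + j)) * (2 * K) := by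
            rw [← Finset.sum_mul, ← ENNReal.ofReal_sum_of_nonneg (fun j _ => by positivity)]
        _ ≤ B := by
            rw [hB]
            exact mul_le_mul_left (ENNReal.ofReal_le_ofReal (hsum_geom n)) _
    have hDle : eLpNorm D 2 μ ≤ B :=
      (Lp.eLpNorm_lim_le_liminf_eLpNorm (fun n => (hPmeas n).aestronglyMeasurable) D htend).trans
        (Filter.liminf_le_of_frequently_le' (Filter.Frequently.of_forall hPle))
    have hDmem : MemLp D 2 μ :=
      ⟨hDaem.aestronglyMeasurable, lt_of_le_of_lt hDle (lt_top_iff_ne_top.mpr hBne)⟩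
    have hI0 : 0 ≤ ∫ ω, ‖D ω‖ ^ 2 ∂μ := integral_nonneg fun ω => by positivity
    have hint : eLpNorm D 2 μ = ENNReal.ofReal ((∫ ω, ‖D ω‖ ^ 2 ∂μ) ^ ((2 : ℝ))⁻¹) := by
      have h := hDmem.eLpNorm_eq_integral_rpow_norm two_ne_zero ENNReal.ofNat_ne_top
      simpa [Real.rpow_two, ENNReal.toReal_ofNat] using h
    have hsqrt : Real.sqrt (∫ ω, ‖D ω‖ ^ 2 ∂μ) = (eLpNorm D 2 μ).toReal := by
      rw [hint, ENNReal.toReal_ofReal (by positivity), Real.sqrt_eq_rpow, one_div]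
    show Real.sqrt (∫ ω, ‖D ω‖ ^ 2 ∂μ) ≤ 2 * K.toReal * (1 - r)⁻¹ * r * r ^ m
    rw [hsqrt]
    calc (eLpNorm D 2 μ).toReal ≤ B.toReal := ENNReal.toReal_mono hBne hDle
      _ = r ^ (m + 1) * (1 - r)⁻¹ * (2 * K.toReal) := by
          rw [hB, ENNReal.toReal_mul, ENNReal.toReal_ofReal (by positivity),
            ENNReal.toReal_mul, ENNReal.toReal_ofNat]
      _ = 2 * K.toReal * (1 - r)⁻¹ * r * r ^ m := by rw [pow_succ]; ring
end

section
/- Let C and Ĉ be self-adjoint compact operators on a Hilbert space H with eigenvalues λ_1 > λ_2 > … and λ̂_1 ≥ λ̂_2 ≥ …, and unit eigenfunctions γ_p, γ̂_p with ⟨γ_p, γ̂_p⟩ ≥ 0. If α_p = min(λ_{p-1} − λ_p, λ_p − λ_{p+1}) > 0, then ‖γ̂_p − γ_p‖ ≤ 2√2 ‖Ĉ − C‖_op / α_p. -/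
open scoped InnerProductSpace

section EigAux

variable {H : Type*} [NormedAddCommGroup H] [InnerProductSpace ℝ H] [CompleteSpace H]

/-- Quadratic form of a self-adjoint operator via an eigenbasis. -/
lemma quadForm_hasSum (A : H →L[ℝ] H) (hA : IsSelfAdjoint A) (mu : ℕ → ℝ) (u : ℕ → H)
    (hu : Orthonormal ℝ u) (heig : ∀ j, A (u j) = mu j • u j)
    (hsp : (Submodule.span ℝ (Set.range u)).topologicalClosure = ⊤) (x : H) :
    HasSum (fun j => mu j * ⟪u j, x⟫_ℝ ^ 2) ⟪A x, x⟫_ℝ := by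
  let b : HilbertBasis ℕ ℝ H := HilbertBasis.mk hu (le_of_eq hsp.symm)
  have hb : ⇑b = u := HilbertBasis.coe_mk hu _
  have h := b.hasSum_inner_mul_inner x (A x)
  rw [hb] at h
  have hterm : (fun i => ⟪x, u i⟫_ℝ * ⟪u i, A x⟫_ℝ) = fun i => mu i * ⟪u i, x⟫_ℝ ^ 2 := by
    funext i
    have h1 : ⟪u i, A x⟫_ℝ = mu i * ⟪u i, x⟫_ℝ := by
      have hs := hA.isSymmetric (u i) x
      simp only [ContinuousLinearMap.coe_coe] at hs
      rw [← hs, heig i, real_inner_smul_left]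
    rw [h1, real_inner_comm x (u i)]
    ring
  rw [hterm] at h
  rwa [real_inner_comm (A x) x] at h

/-- Parseval identity for squares of coefficients. -/
lemma parseval_hasSum (u : ℕ → H) (hu : Orthonormal ℝ u)
    (hsp : (Submodule.span ℝ (Set.range u)).topologicalClosure = ⊤) (x : H) :
    HasSum (fun j => ⟪u j, x⟫_ℝ ^ 2) (‖x‖ ^ 2) := by
  let b : HilbertBasis ℕ ℝ H := HilbertBasis.mk hu (le_of_eq hsp.symm)
  have hb : ⇑b = u := HilbertBasis.coe_mk hu _
  have h := b.hasSum_inner_mul_inner x x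
  rw [hb, real_inner_self_eq_norm_sq] at h
  have hterm : (fun i => ⟪x, u i⟫_ℝ * ⟪u i, x⟫_ℝ) = fun i => ⟪u i, x⟫_ℝ ^ 2 := by
    funext i; rw [real_inner_comm x (u i)]; ring
  rwa [hterm] at h


/-- In the span of `p+1` orthonormal vectors there is a unit vector orthogonal to any
given `p` vectors. -/
lemma exists_perp_unit (u v : ℕ → H) (hv : Orthonormal ℝ v) (p : ℕ) :
    ∃ d : Fin (p+1) → ℝ, ‖∑ i, d i • v (i : ℕ)‖ = 1 ∧
      ∀ j < p, ⟪u j, ∑ i, d i • v (i : ℕ)⟫_ℝ = 0 := by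
  classical
  have hvf : Orthonormal ℝ (fun i : Fin (p+1) => v (i : ℕ)) :=
    hv.comp _ Fin.val_injective
  let S : (Fin (p+1) → ℝ) →ₗ[ℝ] H :=
    { toFun := fun d => ∑ i, d i • v (i : ℕ)
      map_add' := fun a b => by simp [add_smul, Finset.sum_add_distrib]
      map_smul' := fun c a => by simp [smul_smul, Finset.smul_sum] }
  let T : H →ₗ[ℝ] (Fin p → ℝ) :=
    LinearMap.pi fun j : Fin p => ((innerSL ℝ (u (j : ℕ))).toLinearMap)
  have hnotinj : ¬ Function.Injective (T ∘ₗ S) := by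
    intro hinj
    have h1 := LinearMap.finrank_le_finrank_of_injective hinj
    rw [Module.finrank_fin_fun, Module.finrank_fin_fun] at h1
    omega
  obtain ⟨a, b, hab, hne⟩ := Function.not_injective_iff.mp hnotinj
  set d0 : Fin (p+1) → ℝ := a - b with hd0
  have hd0ne : d0 ≠ 0 := sub_ne_zero_of_ne hne
  have hker : (T ∘ₗ S) d0 = 0 := by rw [hd0, map_sub, hab, sub_self]
  set y : H := S d0 with hy
  have hyinner : ⟪y, y⟫_ℝ = ∑ i, d0 i * d0 i := by
    simpa [hy, S] using hvf.inner_sum d0 d0 Finset.univ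
  have hypos : 0 < ‖y‖ := by
    rw [norm_pos_iff]
    intro h0
    apply hd0ne
    funext i
    have : (∑ i, d0 i * d0 i) = 0 := by rw [← hyinner, h0, inner_zero_left]
    have hsq : ∀ i ∈ Finset.univ, (0:ℝ) ≤ d0 i * d0 i := fun i _ => mul_self_nonneg _
    have := (Finset.sum_eq_zero_iff_of_nonneg hsq).mp this i (Finset.mem_univ i)
    exact (mul_self_eq_zero).mp this
  refine ⟨(‖y‖⁻¹) • d0, ?_, ?_⟩
  · have hx : (∑ i, ((‖y‖⁻¹) • d0) i • v (i : ℕ)) = ‖y‖⁻¹ • y := by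
      rw [hy]
      simp only [Pi.smul_apply, smul_eq_mul, ← smul_smul]
      rw [← Finset.smul_sum]
      rfl
    rw [hx, norm_smul]
    simp [hypos.ne']
  · intro j hj
    have hx : (∑ i, ((‖y‖⁻¹) • d0) i • v (i : ℕ)) = ‖y‖⁻¹ • y := by
      rw [hy]
      simp only [Pi.smul_apply, smul_eq_mul, ← smul_smul]
      rw [← Finset.smul_sum]
      rfl
    rw [hx, real_inner_smul_right]
    have : ⟪u j, y⟫_ℝ = 0 := by
      have := congrFun hker ⟨j, hj⟩
      simp only [LinearMap.comp_apply, LinearMap.pi_apply, ContinuousLinearMap.coe_coe,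
        innerSL_apply_apply, Pi.zero_apply] at this
      rw [hy]
      simpa [S, T, inner_sum, real_inner_smul_right] using this
    rw [this, mul_zero]

/-- One-sided Weyl inequality: `nu p ≤ mu p + ‖B - A‖`. -/
lemma weyl_aux (A B : H →L[ℝ] H) (hA : IsSelfAdjoint A)
    (mu nu : ℕ → ℝ) (u v : ℕ → H) (hmu : Antitone mu) (hnu : Antitone nu)
    (hu : Orthonormal ℝ u) (hv : Orthonormal ℝ v)
    (heigA : ∀ j, A (u j) = mu j • u j) (heigB : ∀ j, B (v j) = nu j • v j)
    (hspu : (Submodule.span ℝ (Set.range u)).topologicalClosure = ⊤) (p : ℕ) :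
    nu p ≤ mu p + ‖B - A‖ := by
  classical
  obtain ⟨d, hxnorm, hxperp⟩ := exists_perp_unit u v hv p
  set x : H := ∑ i, d i • v (i : ℕ) with hx
  have hvf : Orthonormal ℝ (fun i : Fin (p+1) => v (i : ℕ)) :=
    hv.comp _ Fin.val_injective
  have hsumd : ∑ i, d i * d i = 1 := by
    have h1 : ⟪x, x⟫_ℝ = ∑ i, d i * d i := by
      simpa using hvf.inner_sum d d Finset.univ
    rw [real_inner_self_eq_norm_sq, hxnorm] at h1
    rw [← h1]; norm_num
  -- lower bound for ⟪B x, x⟫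
  have hBx : ⟪B x, x⟫_ℝ = ∑ i : Fin (p+1), (nu (i : ℕ) * d i) * d i := by
    have h1 : B x = ∑ i : Fin (p+1), (nu (i : ℕ) * d i) • v (i : ℕ) := by
      rw [hx, map_sum]
      refine Finset.sum_congr rfl fun i _ => ?_
      rw [ContinuousLinearMap.map_smul, heigB, smul_smul, mul_comm]
    rw [h1, hx]
    simpa using hvf.inner_sum (fun i => nu (i : ℕ) * d i) d Finset.univ
  have h2 : nu p ≤ ⟪B x, x⟫_ℝ := by
    rw [hBx]
    have : nu p = ∑ i : Fin (p+1), nu p * (d i * d i) := by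
      rw [← Finset.mul_sum, hsumd, mul_one]
    rw [this]
    refine Finset.sum_le_sum fun i _ => ?_
    have hle : nu p ≤ nu (i : ℕ) := hnu (Fin.is_le i)
    have hdd : (0:ℝ) ≤ d i * d i := mul_self_nonneg _
    calc nu p * (d i * d i) ≤ nu (i : ℕ) * (d i * d i) := by
          exact mul_le_mul_of_nonneg_right hle hdd
      _ = (nu (i : ℕ) * d i) * d i := by ring
  -- upper bound for ⟪A x, x⟫
  have h3 : ⟪A x, x⟫_ℝ ≤ mu p := by
    have hq := quadForm_hasSum A hA mu u hu heigA hspu x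
    have hpar := parseval_hasSum u hu hspu x
    rw [hxnorm] at hpar
    have hq2 : HasSum (fun j => mu p * ⟪u j, x⟫_ℝ ^ 2) (mu p * 1 ^ 2) := hpar.mul_left (mu p)
    have hle : ∀ j, mu j * ⟪u j, x⟫_ℝ ^ 2 ≤ mu p * ⟪u j, x⟫_ℝ ^ 2 := by
      intro j
      rcases lt_or_ge j p with hj | hj
      · rw [hxperp j hj]; simp
      · exact mul_le_mul_of_nonneg_right (hmu hj) (sq_nonneg _)
    have := hasSum_le hle hq hq2
    simpa using this
  -- perturbation
  have h4 : ⟪B x, x⟫_ℝ ≤ ⟪A x, x⟫_ℝ + ‖B - A‖ := by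
    have he : ⟪B x, x⟫_ℝ = ⟪A x, x⟫_ℝ + ⟪(B - A) x, x⟫_ℝ := by
      rw [ContinuousLinearMap.sub_apply, inner_sub_left]; ring
    rw [he]
    have h5 : ⟪(B - A) x, x⟫_ℝ ≤ ‖(B - A) x‖ * ‖x‖ := real_inner_le_norm _ _
    have h6 : ‖(B - A) x‖ ≤ ‖B - A‖ * ‖x‖ := (B - A).le_opNorm x
    rw [hxnorm] at h5 h6
    nlinarith [norm_nonneg (B - A)]
  linarith

end EigAux

/-- Eigenfunction perturbation bound: let `C`, `Ĉ` be self-adjoint compact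
operators on a Hilbert space with eigenvalues `λ_1 > λ_2 > …` and `λ̂_1 ≥ λ̂_2 ≥ …` and unit
eigenfunctions `γ_p`, `γ̂_p` (each family spanning a dense subspace), with `⟨γ_p, γ̂_p⟩ ≥ 0`.
If `α_p = min(λ_{p-1} − λ_p, λ_p − λ_{p+1}) > 0`, then
`‖γ̂_p − γ_p‖ ≤ 2√2 ‖Ĉ − C‖_op / α_p`. -/
theorem eigenfunction_perturbation_bound
    {H : Type*} [NormedAddCommGroup H] [InnerProductSpace ℝ H] [CompleteSpace H]
    (C Chat : H →L[ℝ] H)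
    (hsa : IsSelfAdjoint C) (hsahat : IsSelfAdjoint Chat)
    (hcpt : IsCompactOperator C) (hcpthat : IsCompactOperator Chat)
    (lam lamhat : ℕ → ℝ) (γ γhat : ℕ → H)
    (hlam : StrictAnti lam) (hlamhat : Antitone lamhat)
    (horth : Orthonormal ℝ γ) (horthhat : Orthonormal ℝ γhat)
    (heig : ∀ j, C (γ j) = lam j • γ j) (heighat : ∀ j, Chat (γhat j) = lamhat j • γhat j)
    (hspan : (Submodule.span ℝ (Set.range γ)).topologicalClosure = ⊤)
    (hspanhat : (Submodule.span ℝ (Set.range γhat)).topologicalClosure = ⊤)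
    (p : ℕ) (hp : 1 ≤ p)
    (hsign : 0 ≤ ⟪γ p, γhat p⟫_ℝ)
    (α : ℝ) (hα : α = min (lam (p - 1) - lam p) (lam p - lam (p + 1))) (hαpos : 0 < α) :
    ‖γhat p - γ p‖ ≤ 2 * Real.sqrt 2 * ‖Chat - C‖ / α := by
  set ε := ‖Chat - C‖ with hε
  have hεnn : 0 ≤ ε := norm_nonneg _
  have hsqrt2 : (0:ℝ) < Real.sqrt 2 := Real.sqrt_pos.mpr (by norm_num)
  have hRnn : 0 ≤ 2 * Real.sqrt 2 * ε / α := by positivity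
  have hc1 : ‖γ p‖ = 1 := horth.1 p
  have hc1h : ‖γhat p‖ = 1 := horthhat.1 p
  set c := ⟪γ p, γhat p⟫_ℝ with hc
  have hcle : c ≤ 1 := by
    have h := real_inner_le_norm (γ p) (γhat p)
    rwa [hc1, hc1h, mul_one] at h
  have hnormsq : ‖γhat p - γ p‖ ^ 2 = 2 - 2 * c := by
    rw [norm_sub_sq_real, hc1, hc1h, real_inner_comm, ← hc]
    ring
  have hrhs : (2 * Real.sqrt 2 * ε / α) ^ 2 = 8 * ε ^ 2 / α ^ 2 := by
    rw [div_pow, mul_pow, mul_pow, Real.sq_sqrt (by norm_num : (0:ℝ) ≤ 2)]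
    ring
  suffices hsq : ‖γhat p - γ p‖ ^ 2 ≤ (2 * Real.sqrt 2 * ε / α) ^ 2 by
    nlinarith [norm_nonneg (γhat p - γ p)]
  rcases le_or_gt α (2 * ε) with hcase | hcase
  · -- trivial case : α ≤ 2ε
    rw [hnormsq, hrhs, le_div_iff₀ (by positivity)]
    nlinarith [hsign, hαpos, hεnn]
  · -- main case : 2ε < α
    have w1 : lamhat p ≤ lam p + ε :=
      weyl_aux C Chat hsa lam lamhat γ γhat hlam.antitone hlamhat horth horthhat
        heig heighat hspan p
    have w2 : lam p ≤ lamhat p + ε := by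
      have h := weyl_aux Chat C hsahat lamhat lam γhat γ hlamhat hlam.antitone horthhat horth
        heighat heig hspanhat p
      rwa [norm_sub_rev] at h
    have hgap : ∀ j, j ≠ p → α / 2 ≤ |lamhat p - lam j| := by
      intro j hj
      rcases lt_or_gt_of_ne hj with hjp | hjp
      · have h1 : lam (p - 1) ≤ lam j := hlam.antitone (by omega)
        have h2 : α ≤ lam (p - 1) - lam p := hα ▸ min_le_left _ _
        have h3 : α / 2 ≤ lam j - lamhat p := by linarith
        calc α / 2 ≤ lam j - lamhat p := h3
          _ ≤ |lamhat p - lam j| := by rw [abs_sub_comm]; exact le_abs_self _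
      · have h1 : lam j ≤ lam (p + 1) := hlam.antitone (by omega)
        have h2 : α ≤ lam p - lam (p + 1) := hα ▸ min_le_right _ _
        have h3 : α / 2 ≤ lamhat p - lam j := by linarith
        exact h3.trans (le_abs_self _)
    set w : H := (Chat - C) (γhat p) with hw
    have hwnorm : ‖w‖ ≤ ε := by
      have h := (Chat - C).le_opNorm (γhat p)
      rwa [hc1h, mul_one] at h
    have hinner : ∀ j, ⟪γ j, w⟫_ℝ = (lamhat p - lam j) * ⟪γ j, γhat p⟫_ℝ := by
      intro j
      have he : (Chat - C) (γhat p) = lamhat p • γhat p - C (γhat p) := by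
        rw [ContinuousLinearMap.sub_apply, heighat]
      rw [hw, he, inner_sub_right, real_inner_smul_right]
      have hC : ⟪γ j, C (γhat p)⟫_ℝ = lam j * ⟪γ j, γhat p⟫_ℝ := by
        have hs := hsa.isSymmetric (γ j) (γhat p)
        simp only [ContinuousLinearMap.coe_coe] at hs
        rw [← hs, heig, real_inner_smul_left]
      rw [hC]; ring
    have hparw : HasSum (fun j => (lamhat p - lam j) ^ 2 * ⟪γ j, γhat p⟫_ℝ ^ 2) (‖w‖ ^ 2) := by
      have hfun : (fun j => (lamhat p - lam j) ^ 2 * ⟪γ j, γhat p⟫_ℝ ^ 2)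
          = fun j => ⟪γ j, w⟫_ℝ ^ 2 := by
        funext j; rw [hinner j, mul_pow]
      rw [hfun]
      exact parseval_hasSum γ horth hspan w
    have hparc : HasSum (fun j => ⟪γ j, γhat p⟫_ℝ ^ 2) 1 := by
      have h := parseval_hasSum γ horth hspan (γhat p)
      rwa [hc1h, one_pow] at h
    have hpp : HasSum (fun j => if j = p then ⟪γ j, γhat p⟫_ℝ ^ 2 else 0) (c ^ 2) := by
      have hfun : (fun j => if j = p then ⟪γ j, γhat p⟫_ℝ ^ 2 else 0)
          = fun j => if j = p then c ^ 2 else 0 := by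
        funext j
        by_cases h : j = p
        · subst h; simp [hc]
        · simp [h]
      rw [hfun]
      exact hasSum_ite_eq p _
    have hg : HasSum (fun j => ⟪γ j, γhat p⟫_ℝ ^ 2 -
        (if j = p then ⟪γ j, γhat p⟫_ℝ ^ 2 else 0)) (1 - c ^ 2) := hparc.sub hpp
    have hkey : (α / 2) ^ 2 * (1 - c ^ 2) ≤ ‖w‖ ^ 2 := by
      refine hasSum_le ?_ (hg.mul_left ((α / 2) ^ 2)) hparw
      intro j
      by_cases h : j = p
      · rw [if_pos h, sub_self, mul_zero]
        positivity
      · rw [if_neg h, sub_zero]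
        have h2 : (α / 2) ^ 2 ≤ (lamhat p - lam j) ^ 2 := by
          calc (α / 2) ^ 2 ≤ |lamhat p - lam j| ^ 2 :=
                pow_le_pow_left₀ (by positivity) (hgap j h) 2
            _ = (lamhat p - lam j) ^ 2 := sq_abs _
        exact mul_le_mul_of_nonneg_right h2 (sq_nonneg _)
    have hwsq : ‖w‖ ^ 2 ≤ ε ^ 2 := pow_le_pow_left₀ (norm_nonneg _) hwnorm 2
    rw [hnormsq, hrhs, le_div_iff₀ (by positivity)]
    nlinarith [hkey, hwsq, hsign, hcle, sq_nonneg α, hαpos]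
end
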